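/- arXiv:math/0005045 — 5 statements merged into one kernel-verified Lean document; each statement's English description precedes it below -/
import Mathlib

section
/- For every polynomial P ∈ K⟨n⟩, the n-tuple of partial cyclic derivatives satisfies Σ_{j=1}^n [X_j, δ_j P] = 0, where [a,b] = ab − ba denotes the commutator. -/
/-! Setup: the free associative algebra `K⟨X_1,…,X_n⟩` realized as the monoid
algebra of the free monoid on `Fin n`, together with the partial cyclic
derivatives `δ_j`, the number operator `N` and the cyclic symmetrization `C`. -/

noncomputable section

/-- `K⟨n⟩`, the ring of polynomials in `n` noncommuting indeterminates. -/
abbrev FreePoly (K : Type) [CommSemiring K] (n : ℕ) : Type :=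
  MonoidAlgebra K (FreeMonoid (Fin n))

/-- The monomial `X_{i_1} ⋯ X_{i_p}` associated to the word `w = [i_1,…,i_p]`. -/
def mono (K : Type) [Field K] {n : ℕ} (w : List (Fin n)) : FreePoly K n :=
  MonoidAlgebra.single (FreeMonoid.ofList w) 1

/-- The indeterminate `X k`. -/
def Xvar (K : Type) [Field K] {n : ℕ} (k : Fin n) : FreePoly K n := mono K [k]

variable {K : Type} [Field K] [CharZero K] {n : ℕ}

/-- The partial cyclic derivative `δ_j = μ̃ ∘ ∂_j`: on a monomial
`X_{i_0} ⋯ X_{i_s}` it gives `∑_{p : i_p = j} X_{i_{p+1}} ⋯ X_{i_s} X_{i_0} ⋯ X_{i_{p-1}}`. -/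
def cycDeriv (j : Fin n) : FreePoly K n →ₗ[K] FreePoly K n :=
  (Finsupp.lsum K fun w => LinearMap.toSpanSingleton K _
    (∑ p : Fin (FreeMonoid.toList w).length,
      if (FreeMonoid.toList w).get p = j then
        mono K ((FreeMonoid.toList w).drop (p + 1) ++ (FreeMonoid.toList w).take p)
      else 0)) ∘ₗ (MonoidAlgebra.coeffLinearEquiv K).toLinearMap

/-- The number operator `N`, multiplying a monomial by its degree. -/
def numOp : FreePoly K n →ₗ[K] FreePoly K n :=
  (Finsupp.lsum K fun w => LinearMap.toSpanSingleton K _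
    ((FreeMonoid.toList w).length • mono K (FreeMonoid.toList w))) ∘ₗ
    (MonoidAlgebra.coeffLinearEquiv K).toLinearMap

/-- The cyclic symmetrization `C`, sending a monomial of degree `p ≥ 1` to the
sum of its `p` cyclic rotations (and `1` to `0`). -/
def cycSym : FreePoly K n →ₗ[K] FreePoly K n :=
  (Finsupp.lsum K fun w => LinearMap.toSpanSingleton K _
    (∑ p ∈ Finset.range (FreeMonoid.toList w).length,
      mono K ((FreeMonoid.toList w).rotate (p + 1)))) ∘ₗ
    (MonoidAlgebra.coeffLinearEquiv K).toLinearMap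

lemma mono_mul (a b : List (Fin n)) : mono K a * mono K b = mono K (a ++ b) := by
  simp [mono, MonoidAlgebra.single_mul_single, ← FreeMonoid.ofList_append]

lemma cycDeriv_mono (j : Fin n) (w : List (Fin n)) :
    cycDeriv j (mono K w) =
      ∑ p : Fin w.length,
        if w.get p = j then mono K (w.drop (p + 1) ++ w.take p) else 0 := by
  rw [cycDeriv, mono, LinearMap.comp_apply]
  simp only [LinearEquiv.coe_coe, MonoidAlgebra.coeffLinearEquiv_apply, MonoidAlgebra.coeff_single]
  erw [Finsupp.lsum_single, LinearMap.toSpanSingleton_apply_one]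
  simp [mono]
  rfl

lemma key_mono (w : List (Fin n)) :
    ∑ j : Fin n, (Xvar K j * cycDeriv j (mono K w) - cycDeriv j (mono K w) * Xvar K j) = 0 := by
  simp only [cycDeriv_mono, Finset.mul_sum, Finset.sum_mul, mul_ite, ite_mul, mul_zero, zero_mul,
    ← Finset.sum_sub_distrib]
  rw [Finset.sum_comm]
  have key : ∀ p : Fin w.length,
      (∑ j : Fin n, ((if w.get p = j then Xvar K j * mono K (w.drop (p+1) ++ w.take p) else 0)
        - (if w.get p = j then mono K (w.drop (p+1) ++ w.take p) * Xvar K j else 0)))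
      = mono K (w.rotate p) - mono K (w.rotate (p+1)) := by
    intro p
    rw [Finset.sum_sub_distrib, Finset.sum_ite_eq, Finset.sum_ite_eq]
    simp only [Finset.mem_univ, if_true]
    congr 1
    · rw [Xvar, mono_mul]
      congr 1
      rw [List.rotate_eq_drop_append_take p.2.le]
      exact congrArg (· ++ List.take (↑p) w) (List.getElem_cons_drop p.2)
    · rw [Xvar, mono_mul]
      congr 1
      rw [List.rotate_eq_drop_append_take (by omega : (p:ℕ)+1 ≤ w.length)]
      rw [List.take_succ]
      simp [List.getElem?_eq_getElem p.2, List.append_assoc]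
  have step : (∑ p : Fin w.length, ∑ j : Fin n,
      ((if w.get p = j then Xvar K j * mono K (w.drop (p+1) ++ w.take p) else 0)
        - (if w.get p = j then mono K (w.drop (p+1) ++ w.take p) * Xvar K j else 0)))
      = ∑ p ∈ Finset.range w.length, (mono K (w.rotate p) - mono K (w.rotate (p+1))) := by
    rw [← Fin.sum_univ_eq_sum_range (fun p => mono K (w.rotate p) - mono K (w.rotate (p+1)))]
    exact Finset.sum_congr rfl fun p _ => key p
  rw [step, Finset.sum_range_sub' (fun p => mono K (w.rotate p)), List.rotate_zero,
    List.rotate_length, sub_self]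

theorem sum_commutator_cycDeriv_eq_zero (P : FreePoly K n) :
    ∑ j : Fin n, (Xvar K j * cycDeriv j P - cycDeriv j P * Xvar K j) = 0 := by
  induction P using MonoidAlgebra.induction_linear with
  | zero => simp
  | add P Q hP hQ =>
    have : ∀ j : Fin n,
        Xvar K j * cycDeriv j (P + Q) - cycDeriv j (P + Q) * Xvar K j
          = (Xvar K j * cycDeriv j P - cycDeriv j P * Xvar K j)
            + (Xvar K j * cycDeriv j Q - cycDeriv j Q * Xvar K j) := by
      intro j; rw [map_add]; noncomm_ring
    rw [Finset.sum_congr rfl fun j _ => this j, Finset.sum_add_distrib, hP, hQ, add_zero]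
  | single w b =>
    have hw : (MonoidAlgebra.single w b : FreePoly K n) = b • mono K (FreeMonoid.toList w) := by
      simp [mono, MonoidAlgebra.smul_single']
    have : ∀ j : Fin n,
        Xvar K j * cycDeriv j (MonoidAlgebra.single w b) - cycDeriv j (MonoidAlgebra.single w b) * Xvar K j
          = b • (Xvar K j * cycDeriv j (mono K (FreeMonoid.toList w))
              - cycDeriv j (mono K (FreeMonoid.toList w)) * Xvar K j) := by
      intro j
      rw [hw, map_smul, smul_sub, mul_smul_comm, smul_mul_assoc]
    rw [Finset.sum_congr rfl fun j _ => this j, ← Finset.smul_sum, key_mono, smul_zero]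
end
end

section
/- Let P_1,…,P_n ∈ K⟨n⟩. If Σ_{j=1}^n [X_j, P_j] = 0, then Σ_{j=1}^n X_j P_j lies in the cyclic subspace CK⟨n⟩. -/
/-! Setup: the free associative algebra `K⟨X_1,…,X_n⟩` realized as the monoid
algebra of the free monoid on `Fin n`, together with the partial cyclic
derivatives `δ_j`, the number operator `N` and the cyclic symmetrization `C`. -/

noncomputable section

variable {K : Type} [Field K] [CharZero K] {n : ℕ}

set_option linter.unusedSectionVars false

open FreeMonoid

lemma coeff_Xvar_mul (j i : Fin n) (Q : FreePoly K n) (v : List (Fin n)) :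
    (Xvar K j * Q).coeff (FreeMonoid.ofList (i :: v)) =
      if j = i then Q.coeff (FreeMonoid.ofList v) else 0 := by
  by_cases hji : j = i
  · subst hji
    rw [if_pos rfl]
    have H : ∀ a, ofList [j] * a = ofList (j :: v) ↔ a = ofList v := by
      intro a
      constructor
      · intro ha
        have : toList (ofList [j] * a) = toList (ofList (j :: v)) := by rw [ha]
        simp only [toList_mul, toList_ofList] at this
        have : toList a = v := by simpa using this
        rw [← this, ofList_toList]
      · rintro rfl; rfl
    have := MonoidAlgebra.single_mul_apply_aux (r := (1:K)) (x := Q) _ (fun a _ => H a)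
    simpa [Xvar, mono] using this
  · rw [if_neg hji]
    apply MonoidAlgebra.single_mul_apply_of_not_exists_mul
    rintro ⟨d, hd⟩
    have : toList (ofList (i :: v)) = toList (ofList [j] * d) := by rw [hd]
    simp only [toList_mul, toList_ofList] at this
    exact hji (by simpa using (List.cons.injEq .. ▸ this).1.symm)

lemma coeff_mul_Xvar (j i : Fin n) (Q : FreePoly K n) (v : List (Fin n)) :
    (Q * Xvar K j).coeff (FreeMonoid.ofList (v ++ [i])) =
      if j = i then Q.coeff (FreeMonoid.ofList v) else 0 := by
  by_cases hji : j = i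
  · subst hji
    rw [if_pos rfl]
    have H : ∀ a, a * ofList [j] = ofList (v ++ [j]) ↔ a = ofList v := by
      intro a
      constructor
      · intro ha
        have : a * ofList [j] = ofList v * ofList [j] := by
          rw [ha, ofList_append]
        exact mul_right_cancel this
      · rintro rfl; exact (ofList_append _ _).symm
    have := MonoidAlgebra.mul_single_apply_aux (r := (1:K)) (x := Q) _ (fun a _ => H a)
    simpa [Xvar, mono] using this
  · rw [if_neg hji]
    apply MonoidAlgebra.mul_single_apply_of_not_exists_mul
    rintro ⟨d, hd⟩
    have : toList (ofList (v ++ [i])) = toList (d * ofList [j]) := by rw [hd]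
    simp only [toList_mul, toList_ofList] at this
    have h1 : (v ++ [i]).getLast? = (toList d ++ [j]).getLast? := by rw [this]
    rw [List.getLast?_concat, List.getLast?_concat] at h1
    exact hji (by simpa using h1.symm)

lemma coeff_Xvar_mul_one (j : Fin n) (Q : FreePoly K n) :
    (Xvar K j * Q).coeff (1 : FreeMonoid (Fin n)) = 0 := by
  apply MonoidAlgebra.single_mul_apply_of_not_exists_mul
  rintro ⟨d, hd⟩
  have : toList (1 : FreeMonoid (Fin n)) = toList (ofList [j] * d) := by rw [hd]
  simp only [toList_mul, toList_ofList, toList_one] at this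
  exact List.cons_ne_nil _ _ this.symm

lemma coeff_F_cons (P : Fin n → FreePoly K n) (i : Fin n) (v : List (Fin n)) :
    (∑ j : Fin n, Xvar K j * P j).coeff (FreeMonoid.ofList (i :: v)) =
      (P i).coeff (FreeMonoid.ofList v) := by
  rw [MonoidAlgebra.coeff_sum, Finsupp.finset_sum_apply]
  rw [Finset.sum_eq_single i]
  · rw [coeff_Xvar_mul, if_pos rfl]
  · intro j _ hj
    rw [coeff_Xvar_mul, if_neg hj]
  · intro hi; exact absurd (Finset.mem_univ i) hi

lemma coeff_F_concat (P : Fin n → FreePoly K n)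
    (h : ∑ j : Fin n, (Xvar K j * P j - P j * Xvar K j) = 0)
    (i : Fin n) (v : List (Fin n)) :
    (∑ j : Fin n, Xvar K j * P j).coeff (FreeMonoid.ofList (v ++ [i])) =
      (P i).coeff (FreeMonoid.ofList v) := by
  have hF : (∑ j : Fin n, Xvar K j * P j) = ∑ j : Fin n, P j * Xvar K j := by
    rw [← sub_eq_zero, ← Finset.sum_sub_distrib]; exact h
  rw [hF, MonoidAlgebra.coeff_sum, Finsupp.finset_sum_apply]
  rw [Finset.sum_eq_single i]
  · rw [coeff_mul_Xvar, if_pos rfl]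
  · intro j _ hj
    rw [coeff_mul_Xvar, if_neg hj]
  · intro hi; exact absurd (Finset.mem_univ i) hi

lemma coeff_F_one (P : Fin n → FreePoly K n) :
    (∑ j : Fin n, Xvar K j * P j).coeff (1 : FreeMonoid (Fin n)) = 0 := by
  rw [MonoidAlgebra.coeff_sum, Finsupp.finset_sum_apply]
  exact Finset.sum_eq_zero fun j _ => coeff_Xvar_mul_one j (P j)

lemma coeff_F_rotate (P : Fin n → FreePoly K n)
    (h : ∑ j : Fin n, (Xvar K j * P j - P j * Xvar K j) = 0)
    (l : List (Fin n)) (k : ℕ) :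
    (∑ j : Fin n, Xvar K j * P j).coeff (FreeMonoid.ofList (l.rotate k)) =
      (∑ j : Fin n, Xvar K j * P j).coeff (FreeMonoid.ofList l) := by
  induction k with
  | zero => rw [List.rotate_zero]
  | succ k ih =>
    rw [← ih, ← List.rotate_rotate]
    generalize l.rotate k = m
    cases m with
    | nil => rw [List.rotate_nil]
    | cons a t =>
      rw [List.rotate_cons_succ, List.rotate_zero, coeff_F_cons, coeff_F_concat P h]

lemma rotate_inv {α : Type*} (l : List α) (p : ℕ) (hp : p < l.length) :
    (l.rotate (p + 1)).rotate (l.length - (p + 1) % l.length) = l := by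
  rw [List.rotate_rotate]
  have h1 := Nat.mod_add_div (p + 1) l.length
  have h2 : (p + 1) % l.length < l.length := Nat.mod_lt _ (by omega)
  have h3 : (p + 1) + (l.length - (p + 1) % l.length)
      = l.length * (1 + (p + 1) / l.length) := by
    rw [Nat.mul_add, Nat.mul_one]
    generalize l.length * ((p + 1) / l.length) = m at h1 ⊢
    omega
  rw [h3, List.rotate_length_mul]

lemma rotate_inv' {α : Type*} (l : List α) (p : ℕ) (hp : p < l.length) :
    (l.rotate (l.length - (p + 1) % l.length)).rotate (p + 1) = l := by
  rw [List.rotate_rotate]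
  have h1 := Nat.mod_add_div (p + 1) l.length
  have h2 : (p + 1) % l.length < l.length := Nat.mod_lt _ (by omega)
  have h3 : (l.length - (p + 1) % l.length) + (p + 1)
      = l.length * (1 + (p + 1) / l.length) := by
    rw [Nat.mul_add, Nat.mul_one]
    generalize l.length * ((p + 1) / l.length) = m at h1 ⊢
    omega
  rw [h3, List.rotate_length_mul]

theorem mem_cyclicSubspace_of_sum_commutator_eq_zero (P : Fin n → FreePoly K n)
    (h : ∑ j : Fin n, (Xvar K j * P j - P j * Xvar K j) = 0) :
    (∑ j : Fin n, Xvar K j * P j) ∈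
      LinearMap.range (cycSym (K := K) (n := n)) := by
  classical
  set F : FreePoly K n := ∑ j : Fin n, Xvar K j * P j with hFdef
  set G : FreePoly K n := F.coeff.sum fun w c =>
    MonoidAlgebra.single w (((FreeMonoid.toList w).length : K)⁻¹ * c) with hGdef
  have hG : ∀ w : FreeMonoid (Fin n),
      G.coeff w = ((FreeMonoid.toList w).length : K)⁻¹ * F.coeff w := by
    intro w
    rw [hGdef, MonoidAlgebra.coeff_finsuppSum, Finsupp.sum_apply]
    simp only [MonoidAlgebra.coeff_single, Finsupp.single_apply]
    rw [Finsupp.sum_ite_eq']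
    split_ifs with hw
    · rfl
    · rw [Finsupp.notMem_support_iff.mp hw, mul_zero]
  have hrot : ∀ (l : List (Fin n)) (k : ℕ),
      F.coeff (FreeMonoid.ofList (l.rotate k)) = F.coeff (FreeMonoid.ofList l) :=
    coeff_F_rotate P h
  refine ⟨G, ?_⟩
  ext u
  rw [cycSym, LinearMap.comp_apply]
  erw [Finsupp.lsum_apply]
  rw [LinearEquiv.coe_coe, MonoidAlgebra.coeffLinearEquiv_apply, MonoidAlgebra.coeff_finsuppSum, Finsupp.sum_apply]
  set d := (FreeMonoid.toList u).length with hd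
  set back : ℕ → FreeMonoid (Fin n) := fun p =>
    FreeMonoid.ofList ((FreeMonoid.toList u).rotate (d - (p + 1) % d)) with hback
  have hterm : ∀ (w : FreeMonoid (Fin n)) (c : K),
      (LinearMap.toSpanSingleton K (FreePoly K n)
        (∑ p ∈ Finset.range (FreeMonoid.toList w).length,
          mono K ((FreeMonoid.toList w).rotate (p + 1))) c).coeff u
      = ∑ p ∈ Finset.range d, if w = back p then c else 0 := by
    intro w c
    rw [LinearMap.toSpanSingleton_apply, MonoidAlgebra.coeff_smul, Finsupp.smul_apply,
      MonoidAlgebra.coeff_sum, Finsupp.finset_sum_apply,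
      Finset.smul_sum]
    simp only [mono, MonoidAlgebra.coeff_single, Finsupp.single_apply, smul_ite, smul_eq_mul, mul_one, mul_zero,
      smul_zero]
    by_cases hw : (FreeMonoid.toList w).length = d
    · rw [hw]
      refine Finset.sum_congr rfl fun p hp => ?_
      rw [Finset.mem_range] at hp
      rw [mul_ite, mul_one, mul_zero]
      refine if_congr ⟨?_, ?_⟩ rfl rfl
      · intro hrw
        have h1 : (FreeMonoid.toList w).rotate (p + 1) = FreeMonoid.toList u := by
          rw [← FreeMonoid.toList_ofList ((FreeMonoid.toList w).rotate (p + 1)), hrw]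
        have h2 : FreeMonoid.toList (back p) = FreeMonoid.toList w := by
          rw [hback]
          simp only [FreeMonoid.toList_ofList]
          rw [← h1, ← hw, rotate_inv _ p (by rw [hw]; exact hp)]
        rw [← FreeMonoid.ofList_toList w, ← h2, FreeMonoid.ofList_toList]
      · rintro rfl
        rw [hback]
        simp only [FreeMonoid.toList_ofList]
        rw [rotate_inv' _ p (hd ▸ hp), FreeMonoid.ofList_toList]
    · refine (Finset.sum_eq_zero fun p _ => ?_).trans
        (Eq.symm (Finset.sum_eq_zero fun p _ => ?_))
      · rw [if_neg, mul_zero]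
        intro hrw
        apply hw
        have : (FreeMonoid.toList w).rotate (p + 1) = FreeMonoid.toList u := by
          rw [← FreeMonoid.toList_ofList ((FreeMonoid.toList w).rotate (p + 1)), hrw]
        rw [← List.length_rotate (FreeMonoid.toList w) (p + 1), this]
      · rw [if_neg]
        intro hrw
        apply hw
        have : FreeMonoid.toList w = (FreeMonoid.toList u).rotate (d - (p + 1) % d) := by
          rw [hrw, hback, FreeMonoid.toList_ofList]
        rw [this, List.length_rotate]
  calc (G.coeff.sum fun w c => (LinearMap.toSpanSingleton K (FreePoly K n)
        (∑ p ∈ Finset.range (FreeMonoid.toList w).length,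
          mono K ((FreeMonoid.toList w).rotate (p + 1))) c).coeff u)
      = G.coeff.sum fun w c => ∑ p ∈ Finset.range d, if w = back p then c else 0 := by
        exact Finsupp.sum_congr fun w _ => hterm w (G.coeff w)
    _ = ∑ p ∈ Finset.range d, ∑ w ∈ G.coeff.support, if w = back p then G.coeff w else 0 := by
        rw [Finsupp.sum, Finset.sum_comm]
    _ = ∑ p ∈ Finset.range d, G.coeff (back p) := by
        refine Finset.sum_congr rfl fun p _ => ?_
        rw [Finset.sum_ite_eq' G.coeff.support (back p) (fun w => G.coeff w)]
        split_ifs with hmem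
        · rfl
        · rw [Finsupp.notMem_support_iff.mp hmem]
    _ = ∑ p ∈ Finset.range d, (d : K)⁻¹ * F.coeff u := by
        refine Finset.sum_congr rfl fun p _ => ?_
        rw [hG, hback]
        simp only [FreeMonoid.toList_ofList, List.length_rotate]
        rw [hrot, FreeMonoid.ofList_toList]
    _ = F.coeff u := by
        rw [Finset.sum_const, Finset.card_range, nsmul_eq_mul]
        rcases Nat.eq_zero_or_pos d with hd0 | hd0
        · rw [hd0]
          simp only [Nat.cast_zero, zero_mul]
          have hlen : (FreeMonoid.toList u).length = 0 := by rw [← hd, hd0]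
          have hu : u = 1 := by
            rw [← FreeMonoid.ofList_toList u, List.length_eq_zero_iff.mp hlen]
            rfl
          rw [hu]
          exact (coeff_F_one P).symm
        · rw [← mul_assoc, mul_inv_cancel₀ (Nat.cast_ne_zero.mpr hd0.ne'), one_mul]
end
end

section
/- An n-tuple (P_1,…,P_n) of elements of K⟨n⟩ is a cyclic gradient, i.e. there exists P ∈ K⟨n⟩ with δ_j P = P_j for all 1 ≤ j ≤ n, if and only if Σ_{j=1}^n [X_j, P_j] = 0. -/
/-! Setup: the free associative algebra `K⟨X_1,…,X_n⟩` realized as the monoid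
algebra of the free monoid on `Fin n`, together with the partial cyclic
derivatives `δ_j`, the number operator `N` and the cyclic symmetrization `C`. -/

noncomputable section

variable {K : Type} [Field K] [CharZero K] {n : ℕ}

set_option linter.unusedSectionVars false
set_option linter.unusedTactic false

lemma ofList_inj {a b : List (Fin n)} : FreeMonoid.ofList a = FreeMonoid.ofList b ↔ a = b :=
  FreeMonoid.ofList.apply_eq_iff_eq

lemma Xmul_apply (j a : Fin n) (t : List (Fin n)) (S : FreePoly K n) :
    (Xvar K j * S).coeff (FreeMonoid.ofList (a :: t)) = if j = a then S.coeff (FreeMonoid.ofList t) else 0 := by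
  rw [Xvar, mono]
  split_ifs with hja
  · subst hja
    refine (MonoidAlgebra.single_mul_apply_aux (x := S) _ ?_).trans (one_mul (S.coeff (FreeMonoid.ofList t)))
    intro m _
    constructor
    · intro hm
      have h2 := congrArg FreeMonoid.toList hm
      rw [FreeMonoid.toList_mul] at h2
      simp only [FreeMonoid.toList_ofList, List.singleton_append, List.cons.injEq] at h2
      rw [← FreeMonoid.ofList_toList m, h2.2]
    · rintro rfl
      rfl
  · refine MonoidAlgebra.single_mul_apply_of_not_exists_mul _ _ ?_
    rintro ⟨d, hd⟩
    have h2 := congrArg FreeMonoid.toList hd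
    rw [FreeMonoid.toList_mul] at h2
    simp only [FreeMonoid.toList_ofList, List.singleton_append, List.cons.injEq] at h2
    exact hja h2.1.symm

lemma mulX_apply (j a : Fin n) (m : List (Fin n)) (S : FreePoly K n) :
    (S * Xvar K j).coeff (FreeMonoid.ofList (m ++ [a])) = if j = a then S.coeff (FreeMonoid.ofList m) else 0 := by
  rw [Xvar, mono]
  split_ifs with hja
  · subst hja
    refine (MonoidAlgebra.mul_single_apply_aux (x := S) _ ?_).trans (mul_one (S.coeff (FreeMonoid.ofList m)))
    intro b _
    constructor
    · intro hb
      have h2 := congrArg FreeMonoid.toList hb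
      rw [FreeMonoid.toList_mul] at h2
      simp only [FreeMonoid.toList_ofList] at h2
      rw [List.append_left_inj] at h2
      rw [← FreeMonoid.ofList_toList b, h2]
    · rintro rfl
      rfl
  · refine MonoidAlgebra.mul_single_apply_of_not_exists_mul _ _ ?_
    rintro ⟨d, hd⟩
    have h2 := congrArg FreeMonoid.toList hd
    rw [FreeMonoid.toList_mul] at h2
    simp only [FreeMonoid.toList_ofList] at h2
    have h3 := congrArg List.reverse h2
    simp only [List.reverse_append, List.reverse_cons, List.reverse_nil, List.nil_append,
      List.singleton_append, List.cons.injEq] at h3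
    exact hja h3.1.symm

lemma cycDeriv_single (j : Fin n) (l : List (Fin n)) (c : K) :
    cycDeriv j (MonoidAlgebra.single (FreeMonoid.ofList l) c) =
      c • ∑ p : Fin l.length,
        if l.get p = j then mono K (l.drop (p + 1) ++ l.take p) else 0 := by
  rw [cycDeriv, LinearMap.comp_apply]
  erw [Finsupp.lsum_single]
  rw [LinearMap.toSpanSingleton_apply]
  rfl

lemma mono_mul_mono (v w : List (Fin n)) : mono K v * mono K w = mono K (v ++ w) := by
  simp [mono, MonoidAlgebra.single_mul_single, FreeMonoid.ofList_append]

lemma key_single (l : List (Fin n)) :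
    ∑ j : Fin n, (Xvar K j * cycDeriv j (mono K l) - cycDeriv j (mono K l) * Xvar K j) = 0 := by
  have hδ : ∀ j : Fin n, cycDeriv j (mono K l) =
      ∑ p : Fin l.length, if l.get p = j then mono K (l.drop (p + 1) ++ l.take p) else 0 := by
    intro j
    rw [mono, cycDeriv_single, one_smul]
  have h1 : ∀ j : Fin n, Xvar K j * cycDeriv j (mono K l) =
      ∑ p : Fin l.length, if l.get p = j then mono K (l.rotate p) else 0 := by
    intro j
    rw [hδ, Finset.mul_sum]
    refine Finset.sum_congr rfl fun p _ => ?_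
    rw [mul_ite, mul_zero]
    split_ifs with h
    · rw [Xvar, mono_mul_mono]
      subst h
      congr 1
      rw [List.rotate_eq_drop_append_take p.2.le, ← List.getElem_cons_drop p.2]
      simp [List.cons_append, List.get_eq_getElem, -List.getElem_cons_drop]
    · rfl
  have h2 : ∀ j : Fin n, cycDeriv j (mono K l) * Xvar K j =
      ∑ p : Fin l.length, if l.get p = j then mono K (l.rotate (p + 1)) else 0 := by
    intro j
    rw [hδ, Finset.sum_mul]
    refine Finset.sum_congr rfl fun p _ => ?_
    rw [ite_mul, zero_mul]
    split_ifs with h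
    · rw [Xvar, mono_mul_mono]
      subst h
      congr 1
      rw [List.rotate_eq_drop_append_take (by omega : (p : ℕ) + 1 ≤ l.length), List.take_succ]
      simp [List.get_eq_getElem, List.getElem?_eq_getElem p.2]
    · rfl
  simp only [h1, h2]
  have hswap : ∀ (f : ℕ → List (Fin n)),
      ∑ j : Fin n, ∑ p : Fin l.length, (if l.get p = j then mono K (f p) else 0)
        = ∑ p : Fin l.length, mono K (f p) := by
    intro f
    rw [Finset.sum_comm]
    refine Finset.sum_congr rfl fun p _ => ?_
    rw [Finset.sum_ite_eq, if_pos (Finset.mem_univ _)]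
  rw [Finset.sum_sub_distrib, hswap (fun p => l.rotate p), hswap (fun p => l.rotate (p+1)), Fin.sum_univ_eq_sum_range (fun p => mono K (l.rotate p)),
    Fin.sum_univ_eq_sum_range (fun p => mono K (l.rotate (p + 1)))]
  have h3 : ∑ p ∈ Finset.range l.length, mono K (l.rotate (p + 1)) =
      ∑ p ∈ Finset.range l.length, mono K (l.rotate p) := by
    have e1 := Finset.sum_range_succ (fun p => mono K (l.rotate p)) l.length
    have e2 := Finset.sum_range_succ' (fun p => mono K (l.rotate p)) l.length
    have e3 := e1.symm.trans e2
    rw [List.rotate_length, List.rotate_zero] at e3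
    exact (add_right_cancel e3).symm
  rw [h3, sub_self]

lemma listA {α : Type} (w u : List α) (k : α) (p : ℕ) (hp : p < w.length) (hk : w[p] = k)
    (hu : w.drop (p + 1) ++ w.take p = u) :
    u.length = w.length - 1 ∧ w = u.drop (u.length - p) ++ k :: u.take (u.length - p) := by
  have hlen : u.length = w.length - 1 := by
    subst hu; simp; omega
  refine ⟨hlen, ?_⟩
  have hd : u.drop (u.length - p) = w.take p := by
    subst hu
    apply List.drop_left'
    simp; omega
  have ht : u.take (u.length - p) = w.drop (p + 1) := by
    subst hu
    apply List.take_left'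
    simp; omega
  rw [hd, ht, ← hk, List.getElem_cons_drop hp, List.take_append_drop]

lemma listB {α : Type} (u : List α) (k : α) (s : ℕ) (hs : s ≤ u.length) :
    (u.drop s ++ k :: u.take s).length = u.length + 1 ∧
      ∀ hlt : u.length - s < (u.drop s ++ k :: u.take s).length,
        (u.drop s ++ k :: u.take s)[u.length - s] = k ∧
        (u.drop s ++ k :: u.take s).drop (u.length - s + 1) ++
          (u.drop s ++ k :: u.take s).take (u.length - s) = u := by
  have hdl : (u.drop s).length = u.length - s := by simp
  have hL : (u.drop s ++ k :: u.take s).length = u.length + 1 := by simp; omega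
  refine ⟨hL, fun hlt => ⟨?_, ?_⟩⟩
  · rw [List.getElem_append_right (by omega : (u.drop s).length ≤ u.length - s)]
    simp [hdl]
  · have h1 : (u.drop s ++ k :: u.take s).take (u.length - s) = u.drop s :=
      List.take_left' hdl
    have h2 : (u.drop s ++ k :: u.take s).drop (u.length - s) = k :: u.take s :=
      List.drop_left' hdl
    have h3 : (u.drop s ++ k :: u.take s).drop (u.length - s + 1) = u.take s := by
      rw [← List.drop_drop, h2]
      simp
    rw [h1, h3, List.take_append_drop]

lemma count_lemma (k : Fin n) (u w : List (Fin n)) :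
    (∑ p : Fin w.length,
        if w.get p = k ∧ w.drop ((p : ℕ) + 1) ++ w.take (p : ℕ) = u then (1 : K) else 0) =
      ∑ s ∈ Finset.range (u.length + 1),
        if w = u.drop s ++ k :: u.take s then (1 : K) else 0 := by
  rw [Finset.sum_boole, Finset.sum_boole]
  congr 1
  norm_cast
  refine Finset.card_bij' (fun (p : Fin w.length) _ => u.length - (p : ℕ))
    (fun (s : ℕ) hs => ⟨u.length - s, ?_⟩) ?_ ?_ ?_ ?_
  · -- Fin bound for j
    simp only [Finset.mem_filter, Finset.mem_range] at hs
    rw [hs.2]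
    simp
    (try omega)
  · -- hi
    intro p hp
    simp only [Finset.mem_filter, Finset.mem_univ, true_and] at hp
    obtain ⟨hA, hB⟩ := listA w u k p p.2 (by rw [← List.get_eq_getElem]; exact hp.1) hp.2
    simp only [Finset.mem_filter, Finset.mem_range]
    exact ⟨by omega, hB⟩
  · -- hj
    intro s hs
    simp only [Finset.mem_filter, Finset.mem_range] at hs
    obtain ⟨hs1, hw⟩ := hs
    have hs1' : s ≤ u.length := by omega
    obtain ⟨hL, hrest⟩ := listB u k s hs1'
    simp only [Finset.mem_filter, Finset.mem_univ, true_and]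
    have hlt : u.length - s < (u.drop s ++ k :: u.take s).length := by omega
    obtain ⟨hget, hrot⟩ := hrest hlt
    constructor
    · rw [List.get_eq_getElem]
      simp only [hw] at *
      exact hget
    · simp only [hw] at *
      exact hrot
  · -- left_inv
    intro p hp
    simp only [Finset.mem_filter, Finset.mem_univ, true_and] at hp
    obtain ⟨hA, _⟩ := listA w u k p p.2 (by rw [← List.get_eq_getElem]; exact hp.1) hp.2
    have : p.1 < w.length := p.2
    ext
    simp
    omega
  · -- right_inv
    intro s hs
    simp only [Finset.mem_filter, Finset.mem_range] at hs
    show u.length - (u.length - s) = s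
    omega

lemma cycDeriv_apply (k : Fin n) (S : FreePoly K n) (u : List (Fin n)) :
    (cycDeriv k S).coeff (FreeMonoid.ofList u) =
      ∑ s ∈ Finset.range (u.length + 1),
        S.coeff (FreeMonoid.ofList (u.drop s ++ k :: u.take s)) := by
  classical
  rw [cycDeriv, LinearMap.comp_apply]
  erw [Finsupp.lsum_apply]
  rw [MonoidAlgebra.coeff_finsuppSum, Finsupp.sum_apply]
  have step1 : ∀ w c, (LinearMap.toSpanSingleton K (FreePoly K n)
      (∑ p : Fin (FreeMonoid.toList w).length,
        if (FreeMonoid.toList w).get p = k then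
          mono K ((FreeMonoid.toList w).drop ((p : ℕ) + 1) ++ (FreeMonoid.toList w).take (p : ℕ))
        else 0) c).coeff (FreeMonoid.ofList u) =
      c * ∑ s ∈ Finset.range (u.length + 1),
        (if w = FreeMonoid.ofList (u.drop s ++ k :: u.take s) then (1 : K) else 0) := by
    intro w c
    rw [LinearMap.toSpanSingleton_apply, MonoidAlgebra.coeff_smul_apply, smul_eq_mul]
    congr 1
    rw [MonoidAlgebra.coeff_sum, Finset.sum_apply']
    have e1 : ∀ p : Fin (FreeMonoid.toList w).length,
        ((if (FreeMonoid.toList w).get p = k then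
          mono K ((FreeMonoid.toList w).drop ((p : ℕ) + 1) ++ (FreeMonoid.toList w).take (p : ℕ))
          else 0) : FreePoly K n).coeff (FreeMonoid.ofList u) =
        if (FreeMonoid.toList w).get p = k ∧
            (FreeMonoid.toList w).drop ((p : ℕ) + 1) ++ (FreeMonoid.toList w).take (p : ℕ) = u
          then (1 : K) else 0 := by
      intro p
      rw [apply_ite (fun F : FreePoly K n => F.coeff (FreeMonoid.ofList u))]
      rw [mono, MonoidAlgebra.coeff_single_apply]
      simp only [ofList_inj, MonoidAlgebra.coeff_zero, Finsupp.coe_zero, Pi.zero_apply]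
      by_cases h1 : (FreeMonoid.toList w).get p = k <;>
        by_cases h2 : (FreeMonoid.toList w).drop ((p : ℕ) + 1) ++
          (FreeMonoid.toList w).take (p : ℕ) = u <;> simp [h1, h2]
    rw [Finset.sum_congr rfl (fun p _ => e1 p), count_lemma]
    refine Finset.sum_congr rfl fun s _ => ?_
    have hiff : (FreeMonoid.toList w = u.drop s ++ k :: u.take s) ↔
        (w = FreeMonoid.ofList (u.drop s ++ k :: u.take s)) := by
      rw [← ofList_inj, FreeMonoid.ofList_toList]
    simp only [hiff]
  calc (S.coeff.sum fun w c => (LinearMap.toSpanSingleton K (FreePoly K n)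
          (∑ p : Fin (FreeMonoid.toList w).length,
            if (FreeMonoid.toList w).get p = k then
              mono K ((FreeMonoid.toList w).drop ((p : ℕ) + 1) ++ (FreeMonoid.toList w).take (p : ℕ))
            else 0) c).coeff (FreeMonoid.ofList u))
      = ∑ w ∈ S.coeff.support, ∑ s ∈ Finset.range (u.length + 1),
          (if w = FreeMonoid.ofList (u.drop s ++ k :: u.take s) then S.coeff w else 0) := by
        rw [Finsupp.sum]
        refine Finset.sum_congr rfl fun w _ => ?_
        rw [step1, Finset.mul_sum]
        refine Finset.sum_congr rfl fun s _ => ?_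
        rw [mul_ite, mul_one, mul_zero]
    _ = ∑ s ∈ Finset.range (u.length + 1), ∑ w ∈ S.coeff.support,
          (if w = FreeMonoid.ofList (u.drop s ++ k :: u.take s) then S.coeff w else 0) :=
        Finset.sum_comm
    _ = ∑ s ∈ Finset.range (u.length + 1), S.coeff (FreeMonoid.ofList (u.drop s ++ k :: u.take s)) := by
        refine Finset.sum_congr rfl fun s _ => ?_
        by_cases h : FreeMonoid.ofList (u.drop s ++ k :: u.take s) ∈ S.coeff.support
        · rw [Finset.sum_eq_single_of_mem _ h (fun b _ hb => by rw [if_neg hb]), if_pos rfl]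
        · rw [Finset.sum_eq_zero, Finsupp.notMem_support_iff.mp h]
          intro b hb
          rw [if_neg]
          rintro rfl
          exact h hb

def invN : FreePoly K n →ₗ[K] FreePoly K n :=
  (Finsupp.lsum K fun w => LinearMap.toSpanSingleton K _
    ((((FreeMonoid.toList w).length : K))⁻¹ • mono K (FreeMonoid.toList w))) ∘ₗ
      (MonoidAlgebra.coeffLinearEquiv K).toLinearMap

lemma invN_apply (S : FreePoly K n) (u : List (Fin n)) :
    (invN S).coeff (FreeMonoid.ofList u) = ((u.length : K))⁻¹ * S.coeff (FreeMonoid.ofList u) := by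
  classical
  rw [invN, LinearMap.comp_apply]
  erw [Finsupp.lsum_apply]
  rw [MonoidAlgebra.coeff_finsuppSum, Finsupp.sum_apply, Finsupp.sum]
  have e : ∀ w ∈ S.coeff.support,
      ((LinearMap.toSpanSingleton K (FreePoly K n)
        ((((FreeMonoid.toList w).length : K))⁻¹ • mono K (FreeMonoid.toList w))) (S.coeff w)).coeff
        (FreeMonoid.ofList u) =
      if w = FreeMonoid.ofList u then ((u.length : K))⁻¹ * S.coeff (FreeMonoid.ofList u) else 0 := by
    intro w _
    rw [LinearMap.toSpanSingleton_apply, mono, FreeMonoid.ofList_toList, MonoidAlgebra.coeff_smul_apply,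
      MonoidAlgebra.coeff_smul_apply, MonoidAlgebra.coeff_single_apply]
    split_ifs with hw
    · subst hw
      simp only [smul_eq_mul, mul_one]
      rw [mul_comm]
      rfl
    · simp
  refine (Finset.sum_congr rfl e).trans ?_
  by_cases h : FreeMonoid.ofList u ∈ S.coeff.support
  · rw [Finset.sum_eq_single_of_mem _ h (fun b _ hb => if_neg hb), if_pos rfl]
  · rw [Finset.sum_eq_zero (fun b hb => ?_), Finsupp.notMem_support_iff.mp h, mul_zero]
    rw [if_neg]
    rintro rfl
    exact h hb

lemma key_all (Q : FreePoly K n) :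
    ∑ j : Fin n, (Xvar K j * cycDeriv j Q - cycDeriv j Q * Xvar K j) = 0 := by
  induction Q using MonoidAlgebra.induction_linear with
  | zero => simp
  | add f g hf hg =>
      have e : ∀ j : Fin n,
          Xvar K j * cycDeriv j (f + g) - cycDeriv j (f + g) * Xvar K j =
            (Xvar K j * cycDeriv j f - cycDeriv j f * Xvar K j) +
            (Xvar K j * cycDeriv j g - cycDeriv j g * Xvar K j) := by
        intro j
        rw [map_add, mul_add, add_mul]
        abel
      rw [Finset.sum_congr rfl (fun j _ => e j), Finset.sum_add_distrib, hf, hg, add_zero]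
  | single w c =>
      have e : ∀ j : Fin n,
          Xvar K j * cycDeriv j (MonoidAlgebra.single w c)
            - cycDeriv j (MonoidAlgebra.single w c) * Xvar K j =
          c • (Xvar K j * cycDeriv j (mono K (FreeMonoid.toList w))
            - cycDeriv j (mono K (FreeMonoid.toList w)) * Xvar K j) := by
        intro j
        have hw : MonoidAlgebra.single w c =
            c • (mono K (FreeMonoid.toList w) : FreePoly K n) := by
          rw [mono, FreeMonoid.ofList_toList, MonoidAlgebra.smul_single, smul_eq_mul, mul_one]
        rw [hw, map_smul, smul_sub, mul_smul_comm, smul_mul_assoc]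
      rw [Finset.sum_congr rfl (fun j _ => e j), ← Finset.smul_sum,
        key_single (FreeMonoid.toList w), smul_zero]

theorem isCyclicGradient_iff_sum_commutator_eq_zero (P : Fin n → FreePoly K n) :
    (∃ Q : FreePoly K n, ∀ j : Fin n, cycDeriv j Q = P j) ↔
      ∑ j : Fin n, (Xvar K j * P j - P j * Xvar K j) = 0 := by
  constructor
  · rintro ⟨Q, hQ⟩
    simp only [← hQ]
    exact key_all Q
  · intro h
    set R : FreePoly K n := ∑ j : Fin n, Xvar K j * P j with hR
    have hcoe : ∀ u : FreeMonoid (Fin n),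
        R.coeff u = (∑ j : Fin n, P j * Xvar K j : FreePoly K n).coeff u := by
      intro u
      have h' : ((∑ j : Fin n, (Xvar K j * P j - P j * Xvar K j)) : FreePoly K n).coeff u = 0 := by
        rw [h]; rfl
      rw [MonoidAlgebra.coeff_sum, Finset.sum_apply'] at h'
      have h2 : ∀ j : Fin n, ((Xvar K j * P j - P j * Xvar K j : FreePoly K n)).coeff u =
          (Xvar K j * P j : FreePoly K n).coeff u - (P j * Xvar K j : FreePoly K n).coeff u :=
        fun j => rfl
      rw [Finset.sum_congr rfl (fun j _ => h2 j), Finset.sum_sub_distrib, sub_eq_zero] at h'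
      rw [hR, MonoidAlgebra.coeff_sum, MonoidAlgebra.coeff_sum, Finset.sum_apply', Finset.sum_apply', h']
    have hR1 : ∀ (a : Fin n) (m : List (Fin n)),
        R.coeff (FreeMonoid.ofList (a :: m)) = (P a).coeff (FreeMonoid.ofList m) := by
      intro a m
      rw [hR, MonoidAlgebra.coeff_sum, Finset.sum_apply',
        Finset.sum_congr rfl (fun j _ => Xmul_apply j a m (P j)),
        Finset.sum_ite_eq' Finset.univ a (fun j => (P j).coeff (FreeMonoid.ofList m)),
        if_pos (Finset.mem_univ a)]
    have hR2 : ∀ (a : Fin n) (m : List (Fin n)),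
        R.coeff (FreeMonoid.ofList (m ++ [a])) = (P a).coeff (FreeMonoid.ofList m) := by
      intro a m
      rw [hcoe, MonoidAlgebra.coeff_sum, Finset.sum_apply',
        Finset.sum_congr rfl (fun j _ => mulX_apply j a m (P j)),
        Finset.sum_ite_eq' Finset.univ a (fun j => (P j).coeff (FreeMonoid.ofList m)),
        if_pos (Finset.mem_univ a)]
    have hrot : ∀ (a : Fin n) (m : List (Fin n)),
        R.coeff (FreeMonoid.ofList (a :: m)) = R.coeff (FreeMonoid.ofList (m ++ [a])) :=
      fun a m => (hR1 a m).trans (hR2 a m).symm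
    have hinv : ∀ (u : List (Fin n)) (k : Fin n) (s : ℕ), s ≤ u.length →
        R.coeff (FreeMonoid.ofList (u.drop s ++ k :: u.take s)) = (P k).coeff (FreeMonoid.ofList u) := by
      intro u k s
      induction s with
      | zero => intro _; simpa using hR2 k u
      | succ s ih =>
          intro hs
          have hs' : s < u.length := by omega
          have e1 : u.drop s ++ k :: u.take s = u[s] :: (u.drop (s+1) ++ k :: u.take s) := by
            rw [← List.getElem_cons_drop hs']
            rfl
          have e2 : u.drop (s+1) ++ k :: u.take (s+1) =
              (u.drop (s+1) ++ k :: u.take s) ++ [u[s]] := by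
            rw [List.take_succ, List.getElem?_eq_getElem hs']
            simp [List.append_assoc]
          rw [e2, ← hrot u[s] (u.drop (s+1) ++ k :: u.take s), ← e1]
          exact ih (le_of_lt hs')
    refine ⟨invN R, fun j => ?_⟩
    ext u
    have key := cycDeriv_apply j (invN R) (FreeMonoid.toList u)
    rw [FreeMonoid.ofList_toList] at key
    rw [key]
    set l := FreeMonoid.toList u with hl
    have hterm : ∀ s ∈ Finset.range (l.length + 1),
        (invN R).coeff (FreeMonoid.ofList (l.drop s ++ j :: l.take s)) =
          (((l.length : K) + 1))⁻¹ * (P j).coeff u := by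
      intro s hs
      rw [Finset.mem_range] at hs
      have hs' : s ≤ l.length := by omega
      have hlen : (l.drop s ++ j :: l.take s).length = l.length + 1 := by
        simp
        omega
      rw [invN_apply, hinv l j s hs', hl, FreeMonoid.ofList_toList, hlen]
      push_cast
      ring
    rw [Finset.sum_congr rfl hterm, Finset.sum_const, Finset.card_range, nsmul_eq_mul,
      ← mul_assoc]
    have hne : ((l.length : K) + 1) ≠ 0 := Nat.cast_add_one_ne_zero l.length
    rw [show ((l.length + 1 : ℕ) : K) = (l.length : K) + 1 by push_cast; ring,
      mul_inv_cancel₀ hne, one_mul]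
end
end

section
/- The kernel of the cyclic gradient equals the kernel of the cyclic symmetrization: a polynomial P ∈ K⟨n⟩ satisfies δ_j P = 0 for all 1 ≤ j ≤ n if and only if C P = 0. -/
/-! Setup: the free associative algebra `K⟨X_1,…,X_n⟩` realized as the monoid
algebra of the free monoid on `Fin n`, together with the partial cyclic
derivatives `δ_j`, the number operator `N` and the cyclic symmetrization `C`. -/

noncomputable section

variable {K : Type} [Field K] [CharZero K] {n : ℕ}

set_option linter.unusedSectionVars false

/-- the cyclic-derivative value on a word -/
def dterm (j : Fin n) (l : List (Fin n)) : FreePoly K n :=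
  ∑ p : Fin l.length,
    if l.get p = j then mono K (l.drop (p + 1) ++ l.take p) else 0

lemma cycDeriv_single_s10 (j : Fin n) (w : FreeMonoid (Fin n)) (c : K) :
    cycDeriv j (MonoidAlgebra.single w c) = c • dterm j (FreeMonoid.toList w) := by
  rw [cycDeriv]; exact (Finsupp.lsum_single (S := K) _ w c).trans (LinearMap.toSpanSingleton_apply _ _ _ _)

lemma numOp_single (w : FreeMonoid (Fin n)) (c : K) :
    numOp (MonoidAlgebra.single w c)
      = c • ((FreeMonoid.toList w).length • mono K (FreeMonoid.toList w)) := by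
  rw [numOp]; exact (Finsupp.lsum_single (S := K) _ w c).trans (LinearMap.toSpanSingleton_apply _ _ _ _)

lemma cycSym_single (w : FreeMonoid (Fin n)) (c : K) :
    cycSym (MonoidAlgebra.single w c)
      = c • ∑ p ∈ Finset.range (FreeMonoid.toList w).length,
          mono K ((FreeMonoid.toList w).rotate (p + 1)) := by
  rw [cycSym]; exact (Finsupp.lsum_single (S := K) _ w c).trans (LinearMap.toSpanSingleton_apply _ _ _ _)

lemma dterm_rotate_one (j : Fin n) (l : List (Fin n)) :
    dterm (K := K) j (l.rotate 1) = dterm j l := by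
  cases l with
  | nil => simp
  | cons a t =>
      have hrot : (a :: t).rotate 1 = t ++ [a] := by simp [List.rotate_cons_succ]
      rw [hrot]
      unfold dterm
      have hlen : (t ++ [a]).length = (a :: t).length := by simp
      refine Fintype.sum_equiv ((finCongr hlen).trans (finRotate _)) _ _ fun p => ?_
      set e := ((finCongr hlen).trans (finRotate _)) p with hedef
      have hp : (p : ℕ) < t.length + 1 := by simpa using p.isLt
      have he : (e : ℕ) = ((p : ℕ) + 1) % (t.length + 1) := by
        have h1 : (e : ℕ) = ((finRotate (t.length + 1)) (Fin.cast hlen p) : ℕ) := rfl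
        rw [h1, finRotate_succ_apply, Fin.add_def]
        simp only [Fin.coe_cast, Fin.val_one']
        rcases Nat.eq_zero_or_pos t.length with h0 | h0
        · rw [h0]; simp [Nat.mod_one]
        · rw [Nat.mod_eq_of_lt (show 1 < t.length + 1 by omega)]
      simp only [List.get_eq_getElem]
      rcases Nat.lt_or_ge (p : ℕ) t.length with h | h
      · have he' : (e : ℕ) = (p : ℕ) + 1 := by
          rw [he, Nat.mod_eq_of_lt (by omega)]
        have heq : e = ⟨(p : ℕ) + 1, by simp only [List.length_cons]; omega⟩ := Fin.ext he'
        rw [heq]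
        simp only [List.getElem_append_left h, List.getElem_cons_succ,
          List.drop_succ_cons, List.take_succ_cons,
          List.drop_append_of_le_length (show (p : ℕ) + 1 ≤ t.length by omega),
          List.take_append_of_le_length (show (p : ℕ) ≤ t.length by omega),
          List.append_assoc, List.singleton_append]
      · have hpl : (p : ℕ) = t.length := by omega
        have he' : (e : ℕ) = 0 := by rw [he, hpl]; simp
        have heq : e = ⟨0, by simp only [List.length_cons]; omega⟩ := Fin.ext he'
        rw [heq]
        have h2 : (t ++ [a]).drop ((p : ℕ) + 1) = [] := by
          apply List.drop_eq_nil_of_le; simp only [List.length_append, List.length_cons, List.length_nil]; omega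
        have h3 : (t ++ [a]).take (p : ℕ) = t := List.take_left' hpl.symm
        simp only [List.getElem_concat_length hpl, List.getElem_cons_zero,
          h2, h3, List.drop_succ_cons, List.drop_zero, List.take_zero,
          List.nil_append, List.append_nil]

lemma dterm_rotate (j : Fin n) (l : List (Fin n)) (k : ℕ) :
    dterm (K := K) j (l.rotate k) = dterm j l := by
  induction k with
  | zero => rw [List.rotate_zero]
  | succ k ih => rw [← List.rotate_rotate, dterm_rotate_one, ih]

lemma cycDeriv_mono_s10 (j : Fin n) (l : List (Fin n)) :
    cycDeriv j (mono K l) = dterm j l := by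
  rw [mono]
  refine (cycDeriv_single_s10 j _ 1).trans ?_
  rw [one_smul, FreeMonoid.toList_ofList]

lemma mono_toList (w : FreeMonoid (Fin n)) :
    mono K (FreeMonoid.toList w) = MonoidAlgebra.single w 1 := by
  rw [mono, FreeMonoid.ofList_toList]

lemma cycSym_mono (l : List (Fin n)) :
    cycSym (mono K l) = ∑ p ∈ Finset.range l.length, mono K (l.rotate (p + 1)) := by
  rw [mono]
  refine (cycSym_single _ 1).trans ?_
  rw [one_smul, FreeMonoid.toList_ofList]

lemma numOp_mono (l : List (Fin n)) :
    numOp (mono K l) = l.length • mono K l := by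
  rw [mono]
  refine (numOp_single _ 1).trans ?_
  rw [one_smul, FreeMonoid.toList_ofList, mono]

lemma single_eq_smul_mono (w : FreeMonoid (Fin n)) (c : K) :
    (MonoidAlgebra.single w c : FreePoly K n) = c • mono K (FreeMonoid.toList w) := by
  rw [mono_toList, MonoidAlgebra.smul_single', mul_one]

lemma myExt {f g : FreePoly K n →ₗ[K] FreePoly K n}
    (h : ∀ w c, f (MonoidAlgebra.single w c) = g (MonoidAlgebra.single w c)) : f = g :=
  MonoidAlgebra.lhom_ext' fun x => LinearMap.ext fun c => h x c

/-- Key identity: `δ_j ∘ C = δ_j ∘ N`. -/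
lemma cycDeriv_comp_cycSym (j : Fin n) :
    (cycDeriv j).comp cycSym = (cycDeriv (K := K) (n := n) j).comp numOp := by
  refine myExt fun w c => ?_
  simp only [LinearMap.comp_apply]
  rw [single_eq_smul_mono, LinearMap.map_smul, LinearMap.map_smul,
    LinearMap.map_smul, LinearMap.map_smul, cycSym_mono, numOp_mono]
  congr 1
  rw [map_sum, map_nsmul, cycDeriv_mono_s10]
  have h : ∀ p ∈ Finset.range (FreeMonoid.toList w).length,
      cycDeriv j (mono K ((FreeMonoid.toList w).rotate (p + 1)))
        = dterm j (FreeMonoid.toList w) := fun p _ => by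
    rw [cycDeriv_mono_s10, dterm_rotate]
  rw [Finset.sum_congr rfl h, Finset.sum_const, Finset.card_range]

lemma Xvar_mul_mono (i : Fin n) (l : List (Fin n)) :
    Xvar K i * mono K l = mono K (i :: l) := by
  rw [Xvar, mono, mono, mono, MonoidAlgebra.single_mul_single, one_mul]
  rfl

lemma mono_rotate_get (l : List (Fin n)) (p : Fin l.length) :
    l.rotate p = l[(p : ℕ)] :: (l.drop ((p : ℕ) + 1) ++ l.take (p : ℕ)) := by
  rw [List.rotate_eq_drop_append_take (le_of_lt p.isLt),
    ← List.getElem_cons_drop p.isLt, List.cons_append]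

lemma sum_rotate_succ (l : List (Fin n)) :
    ∑ p ∈ Finset.range l.length, mono K (l.rotate (p + 1))
      = ∑ p ∈ Finset.range l.length, mono K (l.rotate p) := by
  cases hL : l.length with
  | zero => simp
  | succ m =>
      have h1 := Finset.sum_range_succ' (fun p => mono K (l.rotate p)) (m + 1)
      have h2 := Finset.sum_range_succ (fun p => mono K (l.rotate p)) (m + 1)
      have hf : mono K (l.rotate (m + 1)) = mono K (l.rotate 0) := by
        rw [← hL, List.rotate_length, List.rotate_zero]
      rw [h2, hf, List.rotate_zero] at h1
      have := add_right_cancel h1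
      rw [this]

/-- `C P = ∑_j X_j · δ_j P`. -/
lemma cycSym_eq_sum (P : FreePoly K n) :
    cycSym P = ∑ j : Fin n, Xvar K j * cycDeriv j P := by
  have : cycSym = ∑ j : Fin n,
      (LinearMap.mulLeft K (Xvar K j)).comp (cycDeriv (K := K) (n := n) j) := by
    refine myExt fun w c => ?_
    simp only [LinearMap.sum_apply, LinearMap.comp_apply, LinearMap.mulLeft_apply]
    rw [single_eq_smul_mono, LinearMap.map_smul, cycSym_mono]
    have hr : ∀ j : Fin n, Xvar K j * cycDeriv j (c • mono K (FreeMonoid.toList w))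
        = c • (Xvar K j * cycDeriv j (mono K (FreeMonoid.toList w))) := fun j => by
      rw [LinearMap.map_smul, mul_smul_comm]
    rw [Finset.sum_congr rfl fun j _ => hr j, ← Finset.smul_sum]
    congr 1
    set l := FreeMonoid.toList w with hl
    have : ∀ j : Fin n, Xvar K j * cycDeriv j (mono K l)
        = ∑ p : Fin l.length, if l.get p = j then
            Xvar K j * mono K (l.drop ((p : ℕ) + 1) ++ l.take (p : ℕ)) else 0 := by
      intro j
      rw [cycDeriv_mono_s10, dterm, Finset.mul_sum]
      exact Finset.sum_congr rfl fun p _ => by rw [mul_ite, mul_zero]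
    rw [Finset.sum_congr rfl fun j _ => this j, Finset.sum_comm]
    have hinner : ∀ p : Fin l.length,
        (∑ j : Fin n, if l.get p = j then
            Xvar K j * mono K (l.drop ((p : ℕ) + 1) ++ l.take (p : ℕ)) else 0)
          = mono K (l.rotate (p : ℕ)) := by
      intro p
      rw [Finset.sum_ite_eq Finset.univ (l.get p)
        (fun j => Xvar K j * mono K (l.drop ((p : ℕ) + 1) ++ l.take (p : ℕ))),
        if_pos (Finset.mem_univ _), List.get_eq_getElem, Xvar_mul_mono,
        ← mono_rotate_get]
    rw [Finset.sum_congr rfl fun p _ => hinner p, Fin.sum_univ_eq_sum_range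
      (fun p => mono K (l.rotate p)), ← sum_rotate_succ]
  rw [this, LinearMap.sum_apply]
  exact Finset.sum_congr rfl fun j _ => by rw [LinearMap.comp_apply, LinearMap.mulLeft_apply]

/-- Projection onto the homogeneous component of degree `d`. -/
def hdeg (d : ℕ) : FreePoly K n →ₗ[K] FreePoly K n :=
  (Finsupp.lsum K fun w => LinearMap.toSpanSingleton K _
    (if (FreeMonoid.toList w).length = d then mono K (FreeMonoid.toList w) else 0)) ∘ₗ
    (MonoidAlgebra.coeffLinearEquiv K).toLinearMap

lemma hdeg_single (d : ℕ) (w : FreeMonoid (Fin n)) (c : K) :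
    hdeg d (MonoidAlgebra.single w c)
      = if (FreeMonoid.toList w).length = d then MonoidAlgebra.single w c else 0 := by
  rw [hdeg]
  refine (Finsupp.lsum_single (S := K) (fun w => LinearMap.toSpanSingleton K (FreePoly K n)
    (if (FreeMonoid.toList w).length = d then mono K (FreeMonoid.toList w) else 0)) w c).trans ?_
  rw [LinearMap.toSpanSingleton_apply, smul_ite, smul_zero, ← single_eq_smul_mono]

lemma hdeg_mono (d : ℕ) (l : List (Fin n)) :
    hdeg d (mono K l) = if l.length = d then mono K l else 0 := by
  rw [mono]
  refine (hdeg_single d _ 1).trans ?_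
  rw [FreeMonoid.toList_ofList]

lemma cycSym_comp_hdeg (d : ℕ) :
    cycSym.comp (hdeg d) = (hdeg d).comp (cycSym (K := K) (n := n)) := by
  refine myExt fun w c => ?_
  simp only [LinearMap.comp_apply]
  by_cases hd : (FreeMonoid.toList w).length = d
  · rw [hdeg_single, if_pos hd]
    conv_rhs => rw [single_eq_smul_mono, LinearMap.map_smul, cycSym_mono,
      LinearMap.map_smul, map_sum]
    conv_lhs => rw [single_eq_smul_mono, LinearMap.map_smul, cycSym_mono]
    congr 1
    refine Finset.sum_congr rfl fun p _ => ?_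
    rw [hdeg_mono, if_pos (by rw [List.length_rotate]; exact hd)]
  · rw [hdeg_single, if_neg hd, map_zero]
    rw [single_eq_smul_mono, LinearMap.map_smul, cycSym_mono, LinearMap.map_smul,
      map_sum]
    have h0 : ∀ p ∈ Finset.range (FreeMonoid.toList w).length,
        hdeg d (mono K ((FreeMonoid.toList w).rotate (p + 1))) = 0 := fun p _ => by
      rw [hdeg_mono, if_neg (by rw [List.length_rotate]; exact hd)]
    rw [Finset.sum_congr rfl h0, Finset.sum_const_zero, smul_zero]

lemma numOp_hdeg (d : ℕ) (P : FreePoly K n) :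
    numOp (hdeg d P) = d • hdeg d P := by
  induction P using MonoidAlgebra.induction with
  | zero => simp
  | single_add w c f hw hc ih =>
      rw [map_add, map_add, smul_add, ih]
      congr 1
      rw [hdeg_single]
      by_cases hd : (FreeMonoid.toList w).length = d
      · rw [if_pos hd, single_eq_smul_mono, LinearMap.map_smul, numOp_mono, hd,
          smul_comm]
      · rw [if_neg hd, map_zero, smul_zero]

lemma cycDeriv_hdeg_zero (j : Fin n) (P : FreePoly K n) :
    cycDeriv j (hdeg 0 P) = 0 := by
  have : (cycDeriv j).comp (hdeg 0) = (0 : FreePoly K n →ₗ[K] FreePoly K n) := by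
    refine myExt fun w c => ?_
    simp only [LinearMap.comp_apply, LinearMap.zero_apply]
    rw [hdeg_single]
    by_cases hd : (FreeMonoid.toList w).length = 0
    · rw [if_pos hd]
      have hw : w = FreeMonoid.ofList [] := by
        rw [← FreeMonoid.ofList_toList w, List.length_eq_zero_iff.mp hd]
      subst hw
      refine (cycDeriv_single_s10 j _ c).trans ?_
      rw [show dterm (K := K) j (FreeMonoid.toList (FreeMonoid.ofList ([] : List (Fin n)))) = 0
        from by rw [FreeMonoid.toList_ofList]; simp [dterm], smul_zero]
    · rw [if_neg hd, map_zero]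
  exact DFunLike.congr_fun this P

lemma sum_hdeg (P : FreePoly K n) (N : ℕ)
    (hN : ∀ w ∈ P.coeff.support, (FreeMonoid.toList w).length < N) :
    ∑ d ∈ Finset.range N, hdeg d P = P := by
  induction P using MonoidAlgebra.induction with
  | zero => simp
  | single_add w c f hw hc ih =>
      have hwN : (FreeMonoid.toList w).length < N := by
        apply hN
        rw [MonoidAlgebra.coeff_add, MonoidAlgebra.coeff_single, Finsupp.mem_support_iff, Finsupp.add_apply, Finsupp.single_eq_same,
          Finsupp.notMem_support_iff.mp hw, add_zero]
        exact hc
      have hfN : ∀ v ∈ f.coeff.support, (FreeMonoid.toList v).length < N := by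
        intro v hv
        apply hN
        rw [MonoidAlgebra.coeff_add, MonoidAlgebra.coeff_single, Finsupp.mem_support_iff, Finsupp.add_apply]
        have hvw : v ≠ w := fun h => hw (h ▸ hv)
        rw [Finsupp.single_eq_of_ne hvw, zero_add]
        exact Finsupp.mem_support_iff.mp hv
      have hsum : ∀ d ∈ Finset.range N, hdeg d (MonoidAlgebra.single w c + f)
          = hdeg d (MonoidAlgebra.single w c) + hdeg d f := fun d _ => map_add _ _ _
      rw [Finset.sum_congr rfl hsum, Finset.sum_add_distrib, ih hfN]
      congr 1
      have h1 : ∀ d ∈ Finset.range N, hdeg d (MonoidAlgebra.single w c)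
          = if (FreeMonoid.toList w).length = d then MonoidAlgebra.single w c else 0 :=
        fun d _ => hdeg_single d w c
      rw [Finset.sum_congr rfl h1, Finset.sum_ite_eq (Finset.range N)
        ((FreeMonoid.toList w).length) (fun _ => MonoidAlgebra.single w c),
        if_pos (Finset.mem_range.mpr hwN)]

theorem cycDeriv_eq_zero_iff_cycSym_eq_zero (P : FreePoly K n) :
    (∀ j : Fin n, cycDeriv j P = 0) ↔ cycSym P = 0 := by
  constructor
  · intro h
    rw [cycSym_eq_sum]
    exact Finset.sum_eq_zero fun j _ => by rw [h j, mul_zero]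
  · intro h j
    set N := (P.coeff.support.sup fun w => (FreeMonoid.toList w).length) + 1 with hNdef
    have hdecomp : ∑ d ∈ Finset.range N, hdeg d P = P :=
      sum_hdeg P N fun w hw => Nat.lt_succ_of_le (Finset.le_sup hw)
    rw [← hdecomp, map_sum]
    refine Finset.sum_eq_zero fun d _ => ?_
    rcases d with _ | k
    · exact cycDeriv_hdeg_zero j P
    · have h1 : cycSym (hdeg (k + 1) P) = hdeg (k + 1) (cycSym P) := by
        have := LinearMap.congr_fun (cycSym_comp_hdeg (k + 1)) P
        simpa only [LinearMap.comp_apply] using this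
      rw [h, map_zero] at h1
      have h2 : cycDeriv j (cycSym (hdeg (k + 1) P))
          = cycDeriv j (numOp (hdeg (k + 1) P)) := by
        have := LinearMap.congr_fun (cycDeriv_comp_cycSym j) (hdeg (k + 1) P)
        simpa only [LinearMap.comp_apply] using this
      rw [h1, map_zero, numOp_hdeg, map_nsmul] at h2
      have h3 : ((k + 1 : ℕ) : K) • cycDeriv j (hdeg (k + 1) P) = 0 := by
        rw [Nat.cast_smul_eq_nsmul]
        exact h2.symm
      rcases smul_eq_zero.mp h3 with h4 | h4
      · exact absurd h4 (Nat.cast_ne_zero.mpr (Nat.succ_ne_zero k))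
      · exact h4
end
end

section
/- Let P_1,…,P_n ∈ K⟨n⟩ be homogeneous of common degree s ≥ 1, and for each j write P_j = Σ c^j_{i_1…i_s} X_{i_1}⋯X_{i_s}. If Σ_{j=1}^n [X_j, P_j] = 0, then the coefficients satisfy the cyclic relation c^{i_0}_{i_1…i_s} = c^{i_s}_{i_0…i_{s-1}} for all multi-indices (i_0, i_1, …, i_s). -/
/-! Setup: the free associative algebra `K⟨X_1,…,X_n⟩` realized as the monoid
algebra of the free monoid on `Fin n`, together with the partial cyclic
derivatives `δ_j`, the number operator `N` and the cyclic symmetrization `C`. -/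

noncomputable section

variable {K : Type} [Field K] [CharZero K] {n : ℕ}

theorem coeff_cyclic_of_sum_commutator_eq_zero (s : ℕ) (hs : 1 ≤ s)
    (P : Fin n → FreePoly K n)
    (hhom : ∀ j : Fin n, P j ∈ Submodule.span K
      {x : FreePoly K n | ∃ w : List (Fin n), w.length = s ∧ x = mono K w})
    (h : ∑ j : Fin n, (Xvar K j * P j - P j * Xvar K j) = 0) :
    ∀ (i₀ : Fin n) (t : List (Fin n)), t.length = s →
      (P i₀).coeff (FreeMonoid.ofList t) =
        (P ((i₀ :: t).getLast (List.cons_ne_nil i₀ t))).coeff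
          (FreeMonoid.ofList ((i₀ :: t).dropLast)) := by
  intro i₀ t ht
  set la := (i₀ :: t).getLast (List.cons_ne_nil i₀ t) with hla
  set d := (i₀ :: t).dropLast with hd
  have hsplit : d ++ [la] = i₀ :: t := List.dropLast_append_getLast _
  have h2 := congrArg (fun f : FreePoly K n => f.coeff (FreeMonoid.ofList (i₀ :: t))) h
  rw [MonoidAlgebra.coeff_zero, Finsupp.coe_zero, Pi.zero_apply, MonoidAlgebra.coeff_sum,
    Finset.sum_apply'] at h2

  have hX : ∀ j : Fin n, (Xvar K j * P j).coeff (FreeMonoid.ofList (i₀ :: t)) =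
      if j = i₀ then (P i₀).coeff (FreeMonoid.ofList t) else 0 := by
    intro j
    by_cases hj : j = i₀
    · subst hj
      have H : ∀ a : FreeMonoid (Fin n),
          FreeMonoid.ofList [j] * a = FreeMonoid.ofList (j :: t) ↔ a = FreeMonoid.ofList t := by
        intro a
        constructor
        · intro hh
          have h3 := congrArg FreeMonoid.toList hh
          simp only [FreeMonoid.toList_mul, FreeMonoid.toList_ofList,
            List.singleton_append, List.cons.injEq] at h3
          have : FreeMonoid.ofList (FreeMonoid.toList a) = FreeMonoid.ofList t :=
            congrArg FreeMonoid.ofList h3.2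
          rwa [FreeMonoid.ofList_toList] at this
        · rintro rfl; rfl
      rw [Xvar, mono, MonoidAlgebra.single_mul_apply_aux (x := P j) _ (fun a _ => H a), one_mul, if_pos rfl]
    · rw [if_neg hj, Xvar, mono, MonoidAlgebra.single_mul_apply_of_not_exists_mul]
      rintro ⟨dd, hdd⟩
      apply hj
      have h3 := congrArg FreeMonoid.toList hdd
      simp only [FreeMonoid.toList_mul, FreeMonoid.toList_ofList,
        List.singleton_append, List.cons.injEq] at h3
      exact h3.1.symm
  have hY : ∀ j : Fin n, (P j * Xvar K j).coeff (FreeMonoid.ofList (i₀ :: t)) =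
      if j = la then (P la).coeff (FreeMonoid.ofList d) else 0 := by
    intro j
    by_cases hj : j = la
    · subst hj
      have H : ∀ a : FreeMonoid (Fin n),
          a * FreeMonoid.ofList [la] = FreeMonoid.ofList (i₀ :: t) ↔ a = FreeMonoid.ofList d := by
        intro a
        constructor
        · intro hh
          have h3 := congrArg FreeMonoid.toList hh
          simp only [FreeMonoid.toList_mul, FreeMonoid.toList_ofList] at h3
          rw [← hsplit] at h3
          have h4 : FreeMonoid.toList a = d := List.append_cancel_right h3
          have : FreeMonoid.ofList (FreeMonoid.toList a) = FreeMonoid.ofList d :=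
            congrArg FreeMonoid.ofList h4
          rwa [FreeMonoid.ofList_toList] at this
        · rintro rfl
          show FreeMonoid.ofList (d ++ [(i₀ :: t).getLast _]) = FreeMonoid.ofList (i₀ :: t)
          rw [hsplit]
      rw [Xvar, mono, MonoidAlgebra.mul_single_apply_aux (x := P la) _ (fun a _ => H a), mul_one, if_pos rfl]
    · rw [if_neg hj, Xvar, mono, MonoidAlgebra.mul_single_apply_of_not_exists_mul]
      rintro ⟨dd, hdd⟩
      apply hj
      have h3 := congrArg FreeMonoid.toList hdd
      simp only [FreeMonoid.toList_mul, FreeMonoid.toList_ofList] at h3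
      rw [← hsplit] at h3
      have : la = j := by
        have := congrArg (fun l : List (Fin n) => l.getLast?) h3
        simpa [List.getLast?_concat] using this
      exact this.symm
  have key : ∀ j : Fin n,
      (Xvar K j * P j - P j * Xvar K j).coeff (FreeMonoid.ofList (i₀ :: t)) =
        (if j = i₀ then (P i₀).coeff (FreeMonoid.ofList t) else 0) -
          (if j = la then (P la).coeff (FreeMonoid.ofList d) else 0) := by
    intro j
    rw [MonoidAlgebra.coeff_sub, Finsupp.sub_apply, hX j, hY j]
  rw [Finset.sum_congr rfl fun j _ => key j] at h2
  rw [Finset.sum_sub_distrib, Finset.sum_ite_eq', Finset.sum_ite_eq',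
    if_pos (Finset.mem_univ i₀), if_pos (Finset.mem_univ la), sub_eq_zero] at h2
  exact h2
end
end
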